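/- Let 𝔤 be the 4-dimensional real Lie algebra with basis X₁, X₂, Y₁, Y₂ whose only nonvanishing bracket among basis elements is [Y₁, Y₂] = X₂. Let Ω be the alternating bilinear form with Ω(X₁,Y₁) = Ω(X₂,Y₂) = 1 and Ω vanishing on all other pairs of distinct basis elements, and let j be the linear map with jX_i = Y_i and jY_i = −X_i (i = 1, 2). Then Ω is a nondegenerate 2-cocycle, j is a positive compatible complex structure, the span of the image of N^j equals span{X₂, Y₂}, this span is involutive, its Ω-orthogonal complement equals span{X₁, Y₁}, and that complement is involutive. -/

import Mathlib

/-- The algebraic Nijenhuis tensor of a linear map `j` on a Lie algebra. -/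
def algNijenhuis {𝔤 : Type*} [LieRing 𝔤] [LieAlgebra ℝ 𝔤] (j : 𝔤 →ₗ[ℝ] 𝔤) (X Y : 𝔤) : 𝔤 :=
  ⁅j X, j Y⁆ - j ⁅j X, Y⁆ - j ⁅X, j Y⁆ - ⁅X, Y⁆

/-- A subspace `W` of a Lie algebra is involutive if `⁅W, W⁆ ⊆ W`. -/
def IsInvolutive {𝔤 : Type*} [LieRing 𝔤] [LieAlgebra ℝ 𝔤] (W : Set 𝔤) : Prop :=
  ∀ u ∈ W, ∀ v ∈ W, ⁅u, v⁆ ∈ W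

set_option maxHeartbeats 1000000 in
/-- Example 2.  Basis `b 0 = X₁`, `b 1 = X₂`, `b 2 = Y₁`, `b 3 = Y₂`;
only nonvanishing bracket `⁅Y₁, Y₂⁆ = X₂`; standard `Ω` and `j`.
Then `Ω` is a nondegenerate 2-cocycle, `j` is a positive compatible complex structure,
`Im N^j = span {X₂, Y₂}` is involutive, and its `Ω`-orthogonal complement
`span {X₁, Y₁}` is involutive. -/
theorem stmt_9 (𝔤 : Type*) [LieRing 𝔤] [LieAlgebra ℝ 𝔤]
    (b : Module.Basis (Fin 4) ℝ 𝔤)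
    (hbr : ∀ i k : Fin 4, ⁅b i, b k⁆ =
      if i = 2 ∧ k = 3 then b 1 else if i = 3 ∧ k = 2 then -(b 1) else 0)
    (Ω : 𝔤 →ₗ[ℝ] 𝔤 →ₗ[ℝ] ℝ)
    (hΩ : ∀ i k : Fin 4, Ω (b i) (b k) =
      !![0,0,1,0; 0,0,0,1; -1,0,0,0; 0,-1,0,0] i k)
    (j : 𝔤 →ₗ[ℝ] 𝔤)
    (hj0 : j (b 0) = b 2) (hj1 : j (b 1) = b 3)
    (hj2 : j (b 2) = -(b 0)) (hj3 : j (b 3) = -(b 1)) :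
    (∀ X : 𝔤, (∀ Y : 𝔤, Ω X Y = 0) → X = 0) ∧
    (∀ X Y Z : 𝔤, Ω ⁅X, Y⁆ Z + Ω ⁅Y, Z⁆ X + Ω ⁅Z, X⁆ Y = 0) ∧
    (∀ X : 𝔤, j (j X) = -X) ∧
    (∀ X Y : 𝔤, Ω (j X) (j Y) = Ω X Y) ∧
    (∀ X : 𝔤, X ≠ 0 → 0 < Ω X (j X)) ∧
    Submodule.span ℝ {v : 𝔤 | ∃ X Y : 𝔤, v = algNijenhuis j X Y} =
      Submodule.span ℝ {b 1, b 3} ∧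
    IsInvolutive (↑(Submodule.span ℝ ({b 1, b 3} : Set 𝔤)) : Set 𝔤) ∧
    {x : 𝔤 | ∀ w ∈ Submodule.span ℝ ({b 1, b 3} : Set 𝔤), Ω w x = 0} =
      (↑(Submodule.span ℝ ({b 0, b 2} : Set 𝔤)) : Set 𝔤) ∧
    IsInvolutive (↑(Submodule.span ℝ ({b 0, b 2} : Set 𝔤)) : Set 𝔤) := by
  -- basis expansion
  have hX4 : ∀ X : 𝔤, b.repr X 0 • b 0 + b.repr X 1 • b 1 + b.repr X 2 • b 2
      + b.repr X 3 • b 3 = X := by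
    intro X
    have hX := b.sum_repr X
    rw [Fin.sum_univ_four] at hX
    exact hX
  -- bracket formula
  have hlie : ∀ X Y : 𝔤,
      ⁅X, Y⁆ = (b.repr X 2 * b.repr Y 3 - b.repr X 3 * b.repr Y 2) • b 1 := by
    intro X Y
    conv_lhs => rw [← hX4 X, ← hX4 Y]
    simp only [add_lie, lie_add, smul_lie, lie_smul, hbr]
    simp only [Fin.reduceEq, and_self, and_true, and_false, false_and, if_true, if_false,
      ite_false, ite_true, smul_zero, zero_add, add_zero, smul_neg]
    module
  -- Ω formula
  have hOm : ∀ X Y : 𝔤, Ω X Y = b.repr X 0 * b.repr Y 2 + b.repr X 1 * b.repr Y 3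
      - b.repr X 2 * b.repr Y 0 - b.repr X 3 * b.repr Y 1 := by
    intro X Y
    conv_lhs => rw [← hX4 X, ← hX4 Y]
    simp only [map_add, map_smul, LinearMap.add_apply, LinearMap.smul_apply, hΩ]
    simp [Matrix.cons_val_zero, Matrix.cons_val_one, Matrix.head_cons,
      Matrix.vecHead, Matrix.vecTail]
    ring
  -- j formula
  have hjX : ∀ X : 𝔤, j X = (-(b.repr X 2)) • b 0 + (-(b.repr X 3)) • b 1
      + (b.repr X 0) • b 2 + (b.repr X 1) • b 3 := by
    intro X
    conv_lhs => rw [← hX4 X]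
    simp only [map_add, map_smul, hj0, hj1, hj2, hj3]
    module
  -- coordinates of 4-term combinations
  have hco : ∀ c0 c1 c2 c3 : ℝ,
      b.repr (c0 • b 0 + c1 • b 1 + c2 • b 2 + c3 • b 3) 0 = c0 ∧
      b.repr (c0 • b 0 + c1 • b 1 + c2 • b 2 + c3 • b 3) 1 = c1 ∧
      b.repr (c0 • b 0 + c1 • b 1 + c2 • b 2 + c3 • b 3) 2 = c2 ∧
      b.repr (c0 • b 0 + c1 • b 1 + c2 • b 2 + c3 • b 3) 3 = c3 := by
    intro c0 c1 c2 c3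
    simp [Finsupp.single_apply]
  -- coordinates of j X
  have hjr0 : ∀ X : 𝔤, b.repr (j X) 0 = -(b.repr X 2) := by
    intro X; rw [hjX X]; exact (hco _ _ _ _).1
  have hjr1 : ∀ X : 𝔤, b.repr (j X) 1 = -(b.repr X 3) := by
    intro X; rw [hjX X]; exact (hco _ _ _ _).2.1
  have hjr2 : ∀ X : 𝔤, b.repr (j X) 2 = b.repr X 0 := by
    intro X; rw [hjX X]; exact (hco _ _ _ _).2.2.1
  have hjr3 : ∀ X : 𝔤, b.repr (j X) 3 = b.repr X 1 := by
    intro X; rw [hjX X]; exact (hco _ _ _ _).2.2.2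
  have hb1mem : (b 1) ∈ ({b 1, b 3} : Set 𝔤) := Set.mem_insert _ _
  have hb3mem : (b 3) ∈ ({b 1, b 3} : Set 𝔤) := Set.mem_insert_iff.mpr (Or.inr rfl)
  refine ⟨?_, ?_, ?_, ?_, ?_, ?_, ?_, ?_, ?_⟩
  · -- nondegeneracy
    intro X h
    have h2 := h (b 2); have h3 := h (b 3); have h0 := h (b 0); have h1 := h (b 1)
    rw [hOm] at h2 h3 h0 h1
    simp [Finsupp.single_apply] at h2 h3 h0 h1
    rw [← hX4 X, h0, h1, h2, h3]
    simp
  · -- cocycle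
    intro X Y Z
    rw [hlie X Y, hlie Y Z, hlie Z X]
    simp only [map_smul, LinearMap.smul_apply, smul_eq_mul, hOm (b 1)]
    simp [Finsupp.single_apply]
    ring
  · -- j ∘ j = -id
    intro X
    conv_lhs => rw [hjX X]
    simp only [map_add, map_smul, hj0, hj1, hj2, hj3]
    conv_rhs => rw [← hX4 X]
    module
  · -- compatibility
    intro X Y
    rw [hOm (j X) (j Y), hOm X Y, hjr0, hjr1, hjr2, hjr3, hjr0, hjr1, hjr2, hjr3]
    ring
  · -- positivity
    intro X hXne
    rw [hOm, hjr0, hjr1, hjr2, hjr3]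
    have key : 0 < b.repr X 0 ^ 2 + b.repr X 1 ^ 2 + b.repr X 2 ^ 2 + b.repr X 3 ^ 2 := by
      apply lt_of_le_of_ne (by positivity)
      intro h
      apply hXne
      have h0 : b.repr X 0 = 0 := by nlinarith [sq_nonneg (b.repr X 1), sq_nonneg (b.repr X 2), sq_nonneg (b.repr X 3)]
      have h1 : b.repr X 1 = 0 := by nlinarith [sq_nonneg (b.repr X 0), sq_nonneg (b.repr X 2), sq_nonneg (b.repr X 3)]
      have h2 : b.repr X 2 = 0 := by nlinarith [sq_nonneg (b.repr X 0), sq_nonneg (b.repr X 1), sq_nonneg (b.repr X 3)]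
      have h3 : b.repr X 3 = 0 := by nlinarith [sq_nonneg (b.repr X 0), sq_nonneg (b.repr X 1), sq_nonneg (b.repr X 2)]
      rw [← hX4 X, h0, h1, h2, h3]
      simp
    nlinarith [key]
  · -- span of Nijenhuis image
    apply le_antisymm
    · rw [Submodule.span_le]
      rintro v ⟨X, Y, rfl⟩
      have h1 : b 1 ∈ Submodule.span ℝ ({b 1, b 3} : Set 𝔤) := Submodule.subset_span hb1mem
      have h3 : b 3 ∈ Submodule.span ℝ ({b 1, b 3} : Set 𝔤) := Submodule.subset_span hb3mem
      simp only [algNijenhuis, hlie, map_smul, hj1, SetLike.mem_coe]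
      exact sub_mem (sub_mem (sub_mem (Submodule.smul_mem _ _ h1) (Submodule.smul_mem _ _ h3))
        (Submodule.smul_mem _ _ h3)) (Submodule.smul_mem _ _ h1)
    · rw [Submodule.span_le]
      rintro v (rfl | rfl)
      · apply Submodule.subset_span
        refine ⟨b 0, b 1, ?_⟩
        simp [algNijenhuis, hj0, hj1, hbr]
      · have hm : algNijenhuis j (b 0) (b 3) ∈
            Submodule.span ℝ {v : 𝔤 | ∃ X Y : 𝔤, v = algNijenhuis j X Y} :=
          Submodule.subset_span ⟨b 0, b 3, rfl⟩
        have hval : b 3 = -(algNijenhuis j (b 0) (b 3)) := by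
          simp [algNijenhuis, hj0, hj1, hj3, hbr]
        rw [SetLike.mem_coe, hval]
        exact neg_mem hm
  · -- involutivity of span {b1, b3}
    intro u _ v _
    rw [SetLike.mem_coe, hlie]
    exact Submodule.smul_mem _ _ (Submodule.subset_span hb1mem)
  · -- orthogonal complement
    ext x
    simp only [Set.mem_setOf_eq, SetLike.mem_coe]
    constructor
    · intro h
      have h1 := h (b 1) (Submodule.subset_span hb1mem)
      have h3 := h (b 3) (Submodule.subset_span hb3mem)
      rw [hOm] at h1 h3
      simp [Finsupp.single_apply] at h1 h3
      refine Submodule.mem_span_pair.mpr ⟨b.repr x 0, b.repr x 2, ?_⟩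
      conv_rhs => rw [← hX4 x]
      rw [h1, h3]
      module
    · intro hx w hw
      obtain ⟨a, c, rfl⟩ := Submodule.mem_span_pair.mp hx
      obtain ⟨a', c', rfl⟩ := Submodule.mem_span_pair.mp hw
      rw [hOm]
      simp [Finsupp.single_apply]
  · -- involutivity of span {b0, b2}
    intro u hu v hv
    rw [SetLike.mem_coe] at hu hv ⊢
    obtain ⟨a, c, rfl⟩ := Submodule.mem_span_pair.mp hu
    obtain ⟨a', c', rfl⟩ := Submodule.mem_span_pair.mp hv
    rw [hlie]
    have e : ∀ p q : ℝ, p • b 0 + q • b 2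
        = p • b 0 + (0:ℝ) • b 1 + q • b 2 + (0:ℝ) • b 3 := by
      intro p q; module
    have h3 : b.repr (a • b 0 + c • b 2) 3 = 0 := by
      rw [e a c]; exact (hco _ _ _ _).2.2.2
    have h3' : b.repr (a' • b 0 + c' • b 2) 3 = 0 := by
      rw [e a' c']; exact (hco _ _ _ _).2.2.2
    rw [h3, h3']
    norm_num
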